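/- arXiv:1805.02062 — 2 statements merged into one kernel-verified Lean document; each statement's English description precedes it below -/
import Mathlib

section
/- Let (a_s)_{s ∈ S} be a countable family in L²(ℝ³, ℂ) forming a Parseval tight frame, i.e. ‖f‖²_{L²} = Σ_{s ∈ S} |⟨f, a_s⟩_{L²}|² for every f ∈ L²(ℝ³, ℂ). For a ∈ {1,2,3} define τ_a(ξ) = e_a × (ξ/|ξ|) and the vector-valued family A_s^a(ξ) = a_s(ξ) τ_a(ξ). Then for every U ∈ L²(ℝ³, ℂ³) with ξ₁U₁(ξ) + ξ₂U₂(ξ) + ξ₃U₃(ξ) = 0 for a.e. ξ, one has ‖U‖²_{L²} = Σ_{a=1}^{3} Σ_{s ∈ S} |⟨U, A_s^a⟩_{L²}|², i.e. the three Hedgehog copies of the scalar frame form a Parseval tight frame for the tangential fields in ℝ³. -/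
open MeasureTheory

/-- The Hedgehog frame vector `τ_a(ξ) = e_a × (ξ/|ξ|)`, viewed as a complex vector. -/
noncomputable def tauC (a : Fin 3) (ξ : EuclideanSpace ℝ (Fin 3)) :
    EuclideanSpace ℂ (Fin 3) :=
  (WithLp.equiv 2 (Fin 3 → ℂ)).symm
    fun i => ((crossProduct (Pi.single a 1) (fun j => ξ j / ‖ξ‖)) i : ℂ)

lemma tauC_apply (a : Fin 3) (ξ : EuclideanSpace ℝ (Fin 3)) (i : Fin 3) :
    tauC a ξ i = ((crossProduct (Pi.single a 1) (fun j => ξ j / ‖ξ‖)) i : ℂ) := rfl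

lemma tauC_conj (a : Fin 3) (ξ : EuclideanSpace ℝ (Fin 3)) (i : Fin 3) :
    (starRingEnd ℂ) (tauC a ξ i) = tauC a ξ i := by
  rw [tauC_apply]; exact Complex.conj_ofReal _

/-- Coordinate bound in complex Euclidean space. -/
lemma coord_le_normC (v : EuclideanSpace ℂ (Fin 3)) (i : Fin 3) : ‖v i‖ ≤ ‖v‖ := by
  rw [EuclideanSpace.norm_eq]
  calc ‖v i‖ = Real.sqrt (‖v i‖ ^ 2) := (Real.sqrt_sq (norm_nonneg _)).symm
    _ ≤ _ := Real.sqrt_le_sqrt (Finset.single_le_sum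
        (f := fun j => ‖v j‖ ^ 2) (fun _ _ => sq_nonneg _) (Finset.mem_univ i))

lemma coord_le_normR (ξ : EuclideanSpace ℝ (Fin 3)) (j : Fin 3) : |ξ j| ≤ ‖ξ‖ := by
  rw [EuclideanSpace.norm_eq]
  calc |ξ j| = Real.sqrt (‖ξ j‖ ^ 2) := by
        rw [Real.norm_eq_abs, Real.sqrt_sq (abs_nonneg _)]
    _ ≤ _ := Real.sqrt_le_sqrt (Finset.single_le_sum
        (f := fun k => ‖ξ k‖ ^ 2) (fun _ _ => sq_nonneg _) (Finset.mem_univ j))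

lemma nratio_le_one (ξ : EuclideanSpace ℝ (Fin 3)) (j : Fin 3) : |ξ j / ‖ξ‖| ≤ 1 := by
  rw [abs_div, abs_norm]
  exact div_le_one_of_le₀ (coord_le_normR ξ j) (norm_nonneg _)

lemma tauC_coord_le_one (a : Fin 3) (ξ : EuclideanSpace ℝ (Fin 3)) (i : Fin 3) :
    ‖tauC a ξ i‖ ≤ 1 := by
  rw [tauC_apply, Complex.norm_real, Real.norm_eq_abs]
  fin_cases a <;> fin_cases i <;>
    simp [crossProduct] <;>
    simpa [abs_div, abs_norm] using nratio_le_one ξ _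

lemma tauC_measurable (a i : Fin 3) :
    Measurable (fun ξ : EuclideanSpace ℝ (Fin 3) => tauC a ξ i) := by
  have hj : ∀ j, Measurable (fun ξ : EuclideanSpace ℝ (Fin 3) => ((ξ j : ℂ) / (‖ξ‖ : ℂ))) := by
    intro j
    exact (Complex.measurable_ofReal.comp
      (EuclideanSpace.proj j : EuclideanSpace ℝ (Fin 3) →L[ℝ] ℝ).measurable).div
      (Complex.measurable_ofReal.comp measurable_norm)
  simp only [tauC_apply]
  fin_cases a <;> fin_cases i <;> simp [crossProduct] <;>
    first
      | exact measurable_const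
      | exact hj _
      | exact (hj _).neg

open Complex in
lemma cross_parseval (n : Fin 3 → ℝ) (hn : n 0 ^ 2 + n 1 ^ 2 + n 2 ^ 2 = 1)
    (v : Fin 3 → ℂ) (hv : (n 0 : ℂ) * v 0 + n 1 * v 1 + n 2 * v 2 = 0) :
    normSq ((n 1 : ℂ) * v 2 - n 2 * v 1) + normSq ((n 2 : ℂ) * v 0 - n 0 * v 2)
      + normSq ((n 0 : ℂ) * v 1 - n 1 * v 0)
      = normSq (v 0) + normSq (v 1) + normSq (v 2) := by
  have hnc : (n 0 : ℂ) ^ 2 + (n 1 : ℂ) ^ 2 + (n 2 : ℂ) ^ 2 = 1 := by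
    exact_mod_cast congrArg (Complex.ofReal) hn
  have key : (((n 1 : ℂ) * v 2 - n 2 * v 1) * (starRingEnd ℂ) ((n 1 : ℂ) * v 2 - n 2 * v 1)
      + ((n 2 : ℂ) * v 0 - n 0 * v 2) * (starRingEnd ℂ) ((n 2 : ℂ) * v 0 - n 0 * v 2)
      + ((n 0 : ℂ) * v 1 - n 1 * v 0) * (starRingEnd ℂ) ((n 0 : ℂ) * v 1 - n 1 * v 0))
      = v 0 * (starRingEnd ℂ) (v 0) + v 1 * (starRingEnd ℂ) (v 1)
        + v 2 * (starRingEnd ℂ) (v 2) := by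
    simp only [map_sub, map_mul, Complex.conj_ofReal]
    linear_combination (v 0 * (starRingEnd ℂ) (v 0) + v 1 * (starRingEnd ℂ) (v 1)
        + v 2 * (starRingEnd ℂ) (v 2)) * hnc
      - ((starRingEnd ℂ) (v 0) * n 0 + (starRingEnd ℂ) (v 1) * n 1
        + (starRingEnd ℂ) (v 2) * n 2) * hv
  simp only [Complex.mul_conj] at key
  exact_mod_cast key

lemma pointwise_parseval (ξ : EuclideanSpace ℝ (Fin 3)) (hξ : ξ ≠ 0)
    (v : EuclideanSpace ℂ (Fin 3))
    (hv : (ξ 0 : ℂ) * v 0 + (ξ 1 : ℂ) * v 1 + (ξ 2 : ℂ) * v 2 = 0) :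
    ∑ c : Fin 3, ‖∑ i : Fin 3, v i * tauC c ξ i‖ ^ 2 = ‖v‖ ^ 2 := by
  have hξn : ‖ξ‖ ≠ 0 := norm_ne_zero_iff.2 hξ
  set n : Fin 3 → ℝ := fun j => ξ j / ‖ξ‖ with hn_def
  have hn : n 0 ^ 2 + n 1 ^ 2 + n 2 ^ 2 = 1 := by
    have hnorm : ‖ξ‖ ^ 2 = ξ 0 ^ 2 + ξ 1 ^ 2 + ξ 2 ^ 2 := by
      rw [EuclideanSpace.norm_eq, Real.sq_sqrt (by positivity)]
      simp [Fin.sum_univ_three, sq_abs]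
    rw [hn_def]; simp only [div_pow]
    rw [← add_div, ← add_div, ← hnorm]
    exact div_self (pow_ne_zero 2 hξn)
  have hv' : (n 0 : ℂ) * v 0 + n 1 * v 1 + n 2 * v 2 = 0 := by
    have hc : ((‖ξ‖ : ℝ) : ℂ) ≠ 0 := by exact_mod_cast hξn
    simp only [hn_def, Complex.ofReal_div]
    linear_combination hv / ((‖ξ‖ : ℝ) : ℂ)
  have key := cross_parseval n hn v hv'
  have hnorm_v : ‖v‖ ^ 2
      = Complex.normSq (v 0) + Complex.normSq (v 1) + Complex.normSq (v 2) := by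
    rw [EuclideanSpace.norm_eq, Real.sq_sqrt (by positivity)]
    simp [Fin.sum_univ_three, Complex.sq_norm]
  rw [hnorm_v, ← key]
  rw [Fin.sum_univ_three]
  congr 1
  · congr 1
    · rw [Fin.sum_univ_three, ← Complex.sq_norm]
      congr 1
      simp [tauC, crossProduct, hn_def]
      ring
    · rw [Fin.sum_univ_three, ← Complex.sq_norm]
      congr 1
      simp [tauC, crossProduct, hn_def]
      ring
  · rw [Fin.sum_univ_three, ← Complex.sq_norm]
    congr 1
    simp [tauC, crossProduct, hn_def]
    ring

/-- `‖f‖² = ∫ ‖f x‖²` for `f ∈ L²`. -/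
lemma L2_norm_sq {α : Type*} {E : Type*} [NormedAddCommGroup E] [InnerProductSpace ℂ E]
    [MeasurableSpace α] {μ : Measure α} (f : Lp E 2 μ) :
    ‖f‖ ^ 2 = ∫ x, ‖f x‖ ^ 2 ∂μ := by
  have h : ‖f‖ ^ 2 = RCLike.re (inner (𝕜 := ℂ) f f) := norm_sq_eq_re_inner f
  rw [h, L2.inner_def, ← integral_re (L2.integrable_inner (𝕜 := ℂ) f f)]
  refine integral_congr_ae (Filter.Eventually.of_forall fun x => ?_)
  exact (norm_sq_eq_re_inner (𝕜 := ℂ) (f x)).symm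

/-- If `(a_s)` is a Parseval tight frame for `L²(ℝ³, ℂ)`, then the three Hedgehog copies
`A_s^a(ξ) = a_s(ξ) τ_a(ξ)` form a Parseval tight frame for the tangential fields in
`L²(ℝ³, ℂ³)`. -/
theorem stmt_6 {S : Type*} [Countable S]
    (a : S → Lp ℂ 2 (volume : Measure (EuclideanSpace ℝ (Fin 3))))
    (hframe : ∀ f : Lp ℂ 2 (volume : Measure (EuclideanSpace ℝ (Fin 3))),
      ‖f‖ ^ 2 = ∑' s : S, ‖(inner ℂ f (a s) : ℂ)‖ ^ 2)
    (A : Fin 3 → S →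
      Lp (EuclideanSpace ℂ (Fin 3)) 2 (volume : Measure (EuclideanSpace ℝ (Fin 3))))
    (hA : ∀ (c : Fin 3) (s : S),
      (A c s : EuclideanSpace ℝ (Fin 3) → EuclideanSpace ℂ (Fin 3)) =ᵐ[volume]
        fun ξ => a s ξ • tauC c ξ)
    (U : Lp (EuclideanSpace ℂ (Fin 3)) 2 (volume : Measure (EuclideanSpace ℝ (Fin 3))))
    (hU : ∀ᵐ ξ ∂(volume : Measure (EuclideanSpace ℝ (Fin 3))),
      (ξ 0 : ℂ) * U ξ 0 + (ξ 1 : ℂ) * U ξ 1 + (ξ 2 : ℂ) * U ξ 2 = 0) :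
    ‖U‖ ^ 2 = ∑ c : Fin 3, ∑' s : S, ‖(inner ℂ U (A c s) : ℂ)‖ ^ 2 := by
  classical
  let μ := (volume : Measure (EuclideanSpace ℝ (Fin 3)))
  set g : Fin 3 → EuclideanSpace ℝ (Fin 3) → ℂ :=
    fun c ξ => ∑ i : Fin 3, U ξ i * tauC c ξ i with hg_def
  -- measurability
  have hgm : ∀ c, AEStronglyMeasurable (g c) μ := by
    intro c
    apply Finset.aestronglyMeasurable_fun_sum
    intro i _
    have hUi : AEStronglyMeasurable (fun ξ => U ξ i) μ :=
      ((EuclideanSpace.proj i : EuclideanSpace ℂ (Fin 3) →L[ℂ] ℂ).continuous).comp_aestronglyMeasurable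
        (Lp.aestronglyMeasurable U)
    exact hUi.mul (tauC_measurable c i).aestronglyMeasurable
  -- bound
  have hgb : ∀ c ξ, ‖g c ξ‖ ≤ ‖(3 : ℝ) * ‖U ξ‖‖ := by
    intro c ξ
    have h1 : ‖g c ξ‖ ≤ ∑ i : Fin 3, ‖U ξ i * tauC c ξ i‖ := norm_sum_le _ _
    have h2 : ∀ i : Fin 3, ‖U ξ i * tauC c ξ i‖ ≤ ‖U ξ‖ := by
      intro i
      rw [norm_mul]
      calc ‖U ξ i‖ * ‖tauC c ξ i‖ ≤ ‖U ξ‖ * 1 :=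
        mul_le_mul (coord_le_normC _ i) (tauC_coord_le_one c ξ i) (norm_nonneg _) (norm_nonneg _)
      _ = ‖U ξ‖ := mul_one _
    calc ‖g c ξ‖ ≤ ∑ i : Fin 3, ‖U ξ i * tauC c ξ i‖ := h1
      _ ≤ ∑ _i : Fin 3, ‖U ξ‖ := Finset.sum_le_sum fun i _ => h2 i
      _ = 3 * ‖U ξ‖ := by simp [Fin.sum_univ_three]
      _ ≤ ‖(3 : ℝ) * ‖U ξ‖‖ := le_abs_self _
  have hg2 : ∀ c, MemLp (g c) 2 μ := by
    intro c
    refine MemLp.of_le (((Lp.memLp U).norm).const_mul 3) (hgm c) ?_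
    exact Filter.Eventually.of_forall fun ξ => hgb c ξ
  set G : Fin 3 → Lp ℂ 2 μ := fun c => (hg2 c).toLp (g c) with hG_def
  have hGcoe : ∀ c, (G c : EuclideanSpace ℝ (Fin 3) → ℂ) =ᵐ[μ] g c :=
    fun c => MemLp.coeFn_toLp (hg2 c)
  -- inner products agree
  have hinner : ∀ c s, (inner ℂ U (A c s) : ℂ) = (inner ℂ (G c) (a s) : ℂ) := by
    intro c s
    rw [L2.inner_def, L2.inner_def]
    refine integral_congr_ae ?_
    filter_upwards [hA c s, hGcoe c] with ξ h1 h2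
    simp only [h1, h2, hg_def, PiLp.inner_apply, RCLike.inner_apply, PiLp.smul_apply,
      smul_eq_mul, map_sum, map_mul, tauC_conj, Finset.sum_mul]
    rw [Finset.mul_sum]
    exact Finset.sum_congr rfl fun i _ => by ring
  -- norms add up
  have hInt : ∀ c, Integrable (fun ξ => ‖g c ξ‖ ^ 2) μ := by
    intro c
    have h := (L2.integrable_inner (𝕜 := ℂ) (G c) (G c)).re
    refine h.congr ?_
    filter_upwards [hGcoe c] with ξ hξ
    show RCLike.re (inner (𝕜 := ℂ) ((G c) ξ) ((G c) ξ)) = ‖g c ξ‖ ^ 2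
    rw [← hξ]
    exact (norm_sq_eq_re_inner (𝕜 := ℂ) ((G c) ξ)).symm
  have hne : ∀ᵐ ξ ∂μ, ξ ≠ (0 : EuclideanSpace ℝ (Fin 3)) := by
    have h0 : μ ({(0 : EuclideanSpace ℝ (Fin 3))} : Set (EuclideanSpace ℝ (Fin 3))) = 0 :=
      measure_singleton 0
    rw [ae_iff]
    convert h0 using 2
    ext ξ
    simp
  have hnormsum : ∑ c : Fin 3, ‖G c‖ ^ 2 = ‖U‖ ^ 2 := by
    have h1 : ∀ c, ‖G c‖ ^ 2 = ∫ ξ, ‖g c ξ‖ ^ 2 ∂μ := by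
      intro c
      rw [L2_norm_sq (G c)]
      refine integral_congr_ae ?_
      filter_upwards [hGcoe c] with ξ hξ
      rw [hξ]
    calc ∑ c : Fin 3, ‖G c‖ ^ 2 = ∑ c : Fin 3, ∫ ξ, ‖g c ξ‖ ^ 2 ∂μ :=
          Finset.sum_congr rfl fun c _ => h1 c
      _ = ∫ ξ, ∑ c : Fin 3, ‖g c ξ‖ ^ 2 ∂μ :=
          (integral_finset_sum _ fun c _ => hInt c).symm
      _ = ∫ ξ, ‖U ξ‖ ^ 2 ∂μ := by
          refine integral_congr_ae ?_
          filter_upwards [hU, hne] with ξ h1 h2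
          exact pointwise_parseval ξ h2 (U ξ) h1
      _ = ‖U‖ ^ 2 := (L2_norm_sq U).symm
  have hfinal : ∀ c, ∑' s : S, ‖(inner ℂ U (A c s) : ℂ)‖ ^ 2 = ‖G c‖ ^ 2 := by
    intro c
    rw [hframe (G c)]
    exact tsum_congr fun s => by rw [hinner c s]
  rw [Finset.sum_congr rfl fun c _ => hfinal c]
  exact hnormsum.symm
end

section
/- Define the Portilla–Simoncelli radial window ĥ : (0, ∞) → ℝ by ĥ(r) = cos((π/2) · log₂(2r/π)) if π/4 < r ≤ π, and ĥ(r) = 0 otherwise. Then ĥ satisfies the Caldèron admissibility condition: for every r > 0, Σ_{j ∈ ℤ} ĥ(2^{−j} r)² = 1. -/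
/-- The Portilla–Simoncelli radial window
`ĥ(r) = cos((π/2) log₂(2r/π))` for `π/4 < r ≤ π` and `0` otherwise satisfies the
Caldèron admissibility condition `∑_{j ∈ ℤ} ĥ(2^{-j} r)² = 1` for every `r > 0`. -/
theorem stmt_9 (h : ℝ → ℝ)
    (hh : ∀ r : ℝ, 0 < r →
      h r = if Real.pi / 4 < r ∧ r ≤ Real.pi
        then Real.cos (Real.pi / 2 * Real.logb 2 (2 * r / Real.pi)) else 0)
    (r : ℝ) (hr : 0 < r) :
    ∑' j : ℤ, h ((2 : ℝ) ^ (-j) * r) ^ 2 = 1 := by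
  have hπ := Real.pi_pos
  set t := Real.logb 2 (2 * r / Real.pi) with ht
  have hu : (0:ℝ) < 2 * r / Real.pi := by positivity
  have hrt : 2 * r / Real.pi = (2:ℝ) ^ t := (Real.rpow_logb two_pos (by norm_num) hu).symm
  have hr' : r = Real.pi / 2 * (2:ℝ) ^ t := by
    field_simp at hrt ⊢; linarith [hrt]
  set n := ⌈t⌉ with hn
  have hval : ∀ j : ℤ, h ((2:ℝ)^(-j) * r) =
      if t - 1 ≤ (j:ℝ) ∧ (j:ℝ) < t + 1 then Real.cos (Real.pi/2 * (t - j)) else 0 := by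
    intro j
    have hzpow : ((2:ℝ)^(-j) : ℝ) = (2:ℝ) ^ (-(j:ℝ)) := by
      rw [← Real.rpow_intCast]; push_cast; ring_nf
    have hx : (2:ℝ)^(-j) * r = Real.pi / 2 * (2:ℝ) ^ (t - (j:ℝ)) := by
      rw [hr', hzpow, show t - (j:ℝ) = -(j:ℝ) + t by ring, Real.rpow_add two_pos]
      ring
    have hxpos : (0:ℝ) < (2:ℝ)^(-j) * r := by positivity
    rw [hh _ hxpos, hx]
    have hcond : (Real.pi / 4 < Real.pi / 2 * (2:ℝ) ^ (t - (j:ℝ)) ∧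
        Real.pi / 2 * (2:ℝ) ^ (t - (j:ℝ)) ≤ Real.pi) ↔
        (t - 1 ≤ (j:ℝ) ∧ (j:ℝ) < t + 1) := by
      constructor
      · rintro ⟨h1, h2⟩
        constructor
        · have : (2:ℝ) ^ (t - (j:ℝ)) ≤ (2:ℝ) ^ (1:ℝ) := by
            rw [Real.rpow_one]; nlinarith
          have := (Real.rpow_le_rpow_left_iff one_lt_two).mp this
          linarith
        · have : (2:ℝ) ^ (-1:ℝ) < (2:ℝ) ^ (t - (j:ℝ)) := by
            rw [Real.rpow_neg_one]; nlinarith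
          have := (Real.rpow_lt_rpow_left_iff one_lt_two).mp this
          linarith
      · rintro ⟨h1, h2⟩
        constructor
        · have : (2:ℝ) ^ (-1:ℝ) < (2:ℝ) ^ (t - (j:ℝ)) :=
            (Real.rpow_lt_rpow_left_iff one_lt_two).mpr (by linarith)
          rw [Real.rpow_neg_one] at this; nlinarith
        · have : (2:ℝ) ^ (t - (j:ℝ)) ≤ (2:ℝ) ^ (1:ℝ) :=
            (Real.rpow_le_rpow_left_iff one_lt_two).mpr (by linarith)
          rw [Real.rpow_one] at this; nlinarith
    have harg : Real.logb 2 (2 * (Real.pi / 2 * (2:ℝ) ^ (t - (j:ℝ))) / Real.pi) = t - (j:ℝ) := by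
      rw [show 2 * (Real.pi / 2 * (2:ℝ) ^ (t - (j:ℝ))) / Real.pi = (2:ℝ) ^ (t - (j:ℝ)) by
        field_simp]
      exact Real.logb_rpow (by norm_num) (by norm_num)
    rw [harg]
    exact if_congr hcond rfl rfl
  have hceil1 : (t:ℝ) ≤ (n:ℝ) := Int.le_ceil t
  have hceil2 : (n:ℝ) < t + 1 := Int.ceil_lt_add_one t
  have hzero : ∀ j : ℤ, j ∉ ({n - 1, n} : Finset ℤ) → h ((2:ℝ)^(-j) * r) ^ 2 = 0 := by
    intro j hj
    simp only [Finset.mem_insert, Finset.mem_singleton] at hj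
    push_neg at hj
    rw [hval j, if_neg, zero_pow (by norm_num)]
    rintro ⟨h1, h2⟩
    rcases lt_or_gt_of_ne hj.1 with hlt | hgt
    · have : j ≤ n - 2 := by omega
      have : (j:ℝ) ≤ (n:ℝ) - 2 := by exact_mod_cast this
      linarith
    · have : n + 1 ≤ j := by omega
      have : (n:ℝ) + 1 ≤ (j:ℝ) := by exact_mod_cast this
      linarith
  rw [tsum_eq_sum hzero]
  have hne : (n - 1 : ℤ) ≠ n := by omega
  rw [Finset.sum_insert (by simp [hne]), Finset.sum_singleton]
  rw [hval (n-1), hval n]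
  rw [if_pos, if_pos]
  · push_cast
    have : Real.pi / 2 * (t - ((n:ℝ) - 1)) = Real.pi / 2 * (t - n) + Real.pi / 2 := by ring
    rw [this, Real.cos_add_pi_div_two, neg_sq]
    exact Real.sin_sq_add_cos_sq _
  · exact ⟨by linarith, by linarith⟩
  · push_cast
    exact ⟨by linarith, by linarith⟩
end
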